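/- For any topological spaces X and Y and any ordinal α, the α-th iterated Cantor derivative of the product satisfies (X × Y)^α = ⋃_{β ⊕ γ = α} X^β × Y^γ, where ⊕ denotes the Cantor (natural/Hessenberg) sum of ordinals. -/

import Mathlib

open Set

universe u

namespace Ordinal

/-- Natural (Hessenberg) addition of ordinals, as in the older Mathlib's `Ordinal.nadd`. -/
noncomputable def nadd : Ordinal.{u} → Ordinal.{u} → Ordinal.{u}
  | a, b =>
    max (blsub.{u, u} a fun a' _ => nadd a' b) (blsub.{u, u} b fun b' _ => nadd a b')
termination_by o₁ o₂ => (o₁, o₂)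

end Ordinal

namespace NaturalOps

scoped infixl:65 " ♯ " => Ordinal.nadd

end NaturalOps

/-- The Cantor derivative of a subset `A` of a space, relative to the subspace topology:
points of `A` that do not lie in a finite relatively-open subset of `A`. -/
def sderiv {X : Type*} [TopologicalSpace X] (A : Set X) : Set X :=
  {x | x ∈ A ∧ ∀ U : Set X, IsOpen U → x ∈ U → (U ∩ A).Infinite}

/-- Iterated Cantor derivative of a subset. `cbIter A α` is `A^α`. -/
noncomputable def cbIter {X : Type*} [TopologicalSpace X] (A : Set X) (o : Ordinal) : Set X :=
  Ordinal.limitRecOn o A (fun _ ih => sderiv ih)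
    (fun o _ ih => ⋂ (β : Ordinal), ⋂ (h : β < o), ih β h)

/-- `ρ` is the Cantor-Bendixson rank of `X`. -/
def IsCBRank (X : Type*) [TopologicalSpace X] (ρ : Ordinal) : Prop :=
  cbIter (Set.univ : Set X) ρ = ∅ ∧ ∀ β < ρ, cbIter (Set.univ : Set X) β ≠ ∅

namespace Ordinal

open NaturalOps

theorem nadd_def' (a b : Ordinal.{u}) : a ♯ b =
    max (blsub.{u, u} a fun a' _ => a' ♯ b) (blsub.{u, u} b fun b' _ => a ♯ b') := by
  rw [nadd]

theorem lt_nadd_iff {a b c : Ordinal.{u}} :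
    a < b ♯ c ↔ (∃ b' < b, a ≤ b' ♯ c) ∨ ∃ c' < c, a ≤ b ♯ c' := by
  rw [nadd_def', lt_max_iff, lt_blsub_iff, lt_blsub_iff]
  simp only [exists_prop]

theorem nadd_le_iff {a b c : Ordinal.{u}} :
    b ♯ c ≤ a ↔ (∀ b' < b, b' ♯ c < a) ∧ ∀ c' < c, b ♯ c' < a := by
  rw [nadd_def', max_le_iff, blsub_le_iff, blsub_le_iff]

theorem nadd_lt_nadd_right {b b' : Ordinal.{u}} (h : b < b') (c : Ordinal.{u}) :
    b ♯ c < b' ♯ c :=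
  lt_nadd_iff.2 (Or.inl ⟨b, h, le_rfl⟩)

theorem nadd_lt_nadd_left {c c' : Ordinal.{u}} (h : c < c') (b : Ordinal.{u}) :
    b ♯ c < b ♯ c' :=
  lt_nadd_iff.2 (Or.inr ⟨c, h, le_rfl⟩)

theorem nadd_le_nadd_aux :
    ∀ b c b' c' : Ordinal.{u}, b ≤ b' → c ≤ c' → b ♯ c ≤ b' ♯ c' := by
  intro b
  induction b using Ordinal.induction with
  | h b ihb =>
    intro c
    induction c using Ordinal.induction with
    | h c ihc =>
      intro b' c' hb hc
      refine nadd_le_iff.2 ⟨fun b'' hb'' => ?_, fun c'' hc'' => ?_⟩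
      · exact lt_nadd_iff.2
          (Or.inl ⟨b'', lt_of_lt_of_le hb'' hb, ihb b'' hb'' c b'' c' le_rfl hc⟩)
      · exact lt_nadd_iff.2
          (Or.inr ⟨c'', lt_of_lt_of_le hc'' hc, ihc c'' hc'' b' c'' hb le_rfl⟩)

theorem nadd_le_nadd {b b' c c' : Ordinal.{u}} (hb : b ≤ b') (hc : c ≤ c') :
    b ♯ c ≤ b' ♯ c' :=
  nadd_le_nadd_aux b c b' c' hb hc

theorem nadd_lt_nadd_of_lt_of_le {b b' c c' : Ordinal.{u}} (h1 : b < b') (h2 : c ≤ c') :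
    b ♯ c < b' ♯ c' :=
  lt_of_lt_of_le (nadd_lt_nadd_right h1 c) (nadd_le_nadd le_rfl h2)

theorem nadd_lt_nadd_of_le_of_lt {b b' c c' : Ordinal.{u}} (h1 : b ≤ b') (h2 : c < c') :
    b ♯ c < b' ♯ c' :=
  lt_of_lt_of_le (nadd_lt_nadd_left h2 b) (nadd_le_nadd h1 le_rfl)

theorem nadd_zero (a : Ordinal.{u}) : a ♯ 0 = a := by
  induction a using Ordinal.induction with
  | h a ih =>
    apply le_antisymm
    · refine nadd_le_iff.2 ⟨fun b hb => ?_, fun c hc => absurd hc (not_lt_zero (a := c))⟩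
      rw [ih b hb]; exact hb
    · by_contra h
      have h' := not_le.1 h
      have := nadd_lt_nadd_right h' 0
      rw [ih _ h'] at this
      exact lt_irrefl _ this

theorem zero_nadd (a : Ordinal.{u}) : 0 ♯ a = a := by
  induction a using Ordinal.induction with
  | h a ih =>
    apply le_antisymm
    · refine nadd_le_iff.2 ⟨fun c hc => absurd hc (not_lt_zero (a := c)), fun b hb => ?_⟩
      rw [ih b hb]; exact hb
    · by_contra h
      have h' := not_le.1 h
      have := nadd_lt_nadd_left h' 0
      rw [ih _ h'] at this
      exact lt_irrefl _ this

theorem succ_nadd (a b : Ordinal.{u}) : Order.succ a ♯ b = Order.succ (a ♯ b) := by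
  induction b using Ordinal.induction with
  | h b ih =>
    apply le_antisymm
    · refine nadd_le_iff.2 ⟨fun a' ha' => ?_, fun b' hb' => ?_⟩
      · exact Order.lt_succ_iff.2 (nadd_le_nadd (Order.lt_succ_iff.1 ha') le_rfl)
      · rw [ih b' hb']; exact Order.succ_lt_succ_iff.2 (nadd_lt_nadd_left hb' a)
    · exact Order.succ_le_of_lt (nadd_lt_nadd_right (Order.lt_succ a) b)

theorem nadd_succ (a b : Ordinal.{u}) : a ♯ Order.succ b = Order.succ (a ♯ b) := by
  induction a using Ordinal.induction with
  | h a ih =>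
    apply le_antisymm
    · refine nadd_le_iff.2 ⟨fun a' ha' => ?_, fun b' hb' => ?_⟩
      · rw [ih a' ha']; exact Order.succ_lt_succ_iff.2 (nadd_lt_nadd_right ha' b)
      · exact Order.lt_succ_iff.2 (nadd_le_nadd le_rfl (Order.lt_succ_iff.1 hb'))
    · exact Order.succ_le_of_lt (nadd_lt_nadd_left (Order.lt_succ b) a)

end Ordinal

/-! ### Auxiliary lemmas -/

theorem cbIter_zero {X : Type*} [TopologicalSpace X] (A : Set X) : cbIter A 0 = A :=
  Ordinal.limitRecOn_zero _ _ _

theorem cbIter_succ {X : Type*} [TopologicalSpace X] (A : Set X) (o : Ordinal) :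
    cbIter A (Order.succ o) = sderiv (cbIter A o) :=
  Ordinal.limitRecOn_succ _ _ _ _

theorem cbIter_limit {X : Type*} [TopologicalSpace X] (A : Set X) {o : Ordinal}
    (h : Order.IsSuccLimit o) : cbIter A o = ⋂ (β : Ordinal), ⋂ (_ : β < o), cbIter A β :=
  Ordinal.limitRecOn_limit _ _ _ _ h

theorem sderiv_subset {X : Type*} [TopologicalSpace X] (A : Set X) : sderiv A ⊆ A :=
  fun _ hx => hx.1

theorem cbIter_anti {X : Type*} [TopologicalSpace X] (A : Set X) :
    ∀ (δ : Ordinal) {β : Ordinal}, β ≤ δ → cbIter A δ ⊆ cbIter A β := by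
  intro δ
  induction δ using Ordinal.induction with
  | h δ ih =>
    intro β hβ
    rcases eq_or_lt_of_le hβ with rfl | hlt
    · exact subset_rfl
    · rcases Ordinal.zero_or_succ_or_isSuccLimit δ with rfl | ⟨d, rfl⟩ | hlim
      · exact absurd hlt (not_lt_zero (a := β))
      · rw [cbIter_succ]
        exact (sderiv_subset _).trans (ih d (Order.lt_succ d) (Order.lt_succ_iff.1 hlt))
      · rw [cbIter_limit A hlim]
        exact iInter₂_subset β hlt

/-- If `x` is eventually removed, there is a first stage containing `x` whose derivative
drops `x`. -/
theorem cbIter_rank {X : Type*} [TopologicalSpace X] (A : Set X) {x : X} (hxA : x ∈ A)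
    (h : ¬ ∀ δ : Ordinal.{u}, x ∈ cbIter A δ) :
    ∃ r : Ordinal.{u}, x ∈ cbIter A r ∧ x ∉ cbIter A (Order.succ r) := by
  push_neg at h
  obtain ⟨δ₀, hδ₀⟩ := h
  set S : Set Ordinal := {δ | x ∉ cbIter A δ} with hS
  have hne : S.Nonempty := ⟨δ₀, hδ₀⟩
  obtain ⟨m, hm, hmin⟩ := wellFounded_lt.has_min S hne
  rcases Ordinal.zero_or_succ_or_isSuccLimit m with rfl | ⟨r, rfl⟩ | hlim
  · rw [hS, mem_setOf_eq, cbIter_zero] at hm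
    exact absurd hxA hm
  · refine ⟨r, ?_, hm⟩
    by_contra hr
    exact hmin r hr (Order.lt_succ r)
  · exfalso
    apply hm
    rw [cbIter_limit A hlim]
    refine mem_iInter₂.2 fun δ hδ => ?_
    by_contra hc
    exact hmin δ hc hδ

open NaturalOps in
theorem nadd_split :
    ∀ (e β γ : Ordinal), β ♯ γ = e → ∀ δ ≤ e, ∃ β' γ', β' ≤ β ∧ γ' ≤ γ ∧ β' ♯ γ' = δ := by
  intro e
  induction e using Ordinal.induction with
  | h e ih =>
    intro β γ he δ hδ
    rcases eq_or_lt_of_le hδ with rfl | hlt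
    · exact ⟨β, γ, le_rfl, le_rfl, he⟩
    · rw [← he] at hlt
      rcases Ordinal.lt_nadd_iff.1 hlt with ⟨b', hb', hle⟩ | ⟨c', hc', hle⟩
      · have hsm : b' ♯ γ < e := he ▸ Ordinal.nadd_lt_nadd_right hb' γ
        obtain ⟨β', γ', h1, h2, h3⟩ := ih (b' ♯ γ) hsm b' γ rfl δ hle
        exact ⟨β', γ', h1.trans hb'.le, h2, h3⟩
      · have hsm : β ♯ c' < e := he ▸ Ordinal.nadd_lt_nadd_left hc' β
        obtain ⟨β', γ', h1, h2, h3⟩ := ih (β ♯ c') hsm β c' rfl δ hle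
        exact ⟨β', γ', h1, h2.trans hc'.le, h3⟩

/-- If `x ∈ A^r \ A^{r+1}` then `x` has an open neighborhood meeting `A^r` finitely
and missing `A^{r+1}` entirely. -/
theorem exists_good_nbhd {X : Type*} [TopologicalSpace X] (A : Set X) (r : Ordinal) {x : X}
    (hx : x ∈ cbIter A r) (hx' : x ∉ cbIter A (Order.succ r)) :
    ∃ U : Set X, IsOpen U ∧ x ∈ U ∧ (U ∩ cbIter A r).Finite ∧
      U ∩ cbIter A (Order.succ r) = ∅ := by
  rw [cbIter_succ] at hx'
  have h1 : ∃ U : Set X, IsOpen U ∧ x ∈ U ∧ (U ∩ cbIter A r).Finite := by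
    by_contra hc
    push_neg at hc
    exact hx' ⟨hx, fun U hU hxU => hc U hU hxU⟩
  obtain ⟨U₀, hU₀, hxU₀, hfin⟩ := h1
  have h2 : ∃ U : Set X, IsOpen U ∧ x ∈ U ∧ U ∩ sderiv (cbIter A r) = ∅ := by
    by_contra hc
    push_neg at hc
    refine hx' ⟨hx, fun U hU hxU => ?_⟩
    obtain ⟨z, hzU, hz⟩ := hc U hU hxU
    exact hz.2 U hU hzU
  obtain ⟨U₁, hU₁, hxU₁, hdisj⟩ := h2
  refine ⟨U₀ ∩ U₁, hU₀.inter hU₁, ⟨hxU₀, hxU₁⟩, hfin.subset ?_, ?_⟩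
  · exact inter_subset_inter_left _ (inter_subset_left)
  · rw [cbIter_succ]
    apply subset_empty_iff.1
    rw [← hdisj]
    exact inter_subset_inter_left _ (inter_subset_right)

open NaturalOps in
/-- Iterated Cantor derivatives of a product:
`(X × Y)^α = ⋃_{β ♯ γ = α} X^β × Y^γ`, where `♯` is the Hessenberg (natural) sum. -/
theorem cbIter_prod (X Y : Type*) [TopologicalSpace X] [TopologicalSpace Y] (α : Ordinal) :
    cbIter (Set.univ : Set (X × Y)) α =
      ⋃ (β : Ordinal), ⋃ (γ : Ordinal), ⋃ (_ : β ♯ γ = α),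
        (cbIter (Set.univ : Set X) β) ×ˢ (cbIter (Set.univ : Set Y) γ) := by
  induction α using Ordinal.limitRecOn with
  | zero =>
    apply Set.eq_of_subset_of_subset
    · intro p _
      refine mem_iUnion.2 ⟨0, mem_iUnion.2 ⟨0, mem_iUnion.2 ⟨Ordinal.nadd_zero 0, ?_⟩⟩⟩
      simp [cbIter_zero]
    · intro p _
      rw [cbIter_zero]; trivial
  | add_one α ih =>
    rw [Ordinal.add_one_eq_succ, cbIter_succ]
    apply Set.eq_of_subset_of_subset
    · rintro ⟨x, y⟩ hp
      have hpS := hp.1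
      rw [ih] at hpS
      simp only [mem_iUnion, mem_prod] at hpS
      obtain ⟨β, γ, hsum, hx, hy⟩ := hpS
      by_cases hx1 : x ∈ cbIter (univ : Set X) (Order.succ β)
      · refine mem_iUnion.2 ⟨Order.succ β, mem_iUnion.2 ⟨γ, mem_iUnion.2 ⟨?_, hx1, hy⟩⟩⟩
        rw [Ordinal.succ_nadd, hsum]
      by_cases hy1 : y ∈ cbIter (univ : Set Y) (Order.succ γ)
      · refine mem_iUnion.2 ⟨β, mem_iUnion.2 ⟨Order.succ γ, mem_iUnion.2 ⟨?_, hx, hy1⟩⟩⟩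
        rw [Ordinal.nadd_succ, hsum]
      exfalso
      obtain ⟨U, hU, hxU, hUfin, hUdisj⟩ := exists_good_nbhd _ β hx hx1
      obtain ⟨V, hV, hyV, hVfin, hVdisj⟩ := exists_good_nbhd _ γ hy hy1
      have hinf := hp.2 (U ×ˢ V) (hU.prod hV) ⟨hxU, hyV⟩
      have hfin : ((U ×ˢ V) ∩ cbIter (univ : Set (X × Y)) α).Finite := by
        refine (hUfin.prod hVfin).subset ?_
        rintro ⟨x', y'⟩ ⟨⟨hx'U, hy'V⟩, hq⟩
        rw [ih] at hq
        simp only [mem_iUnion, mem_prod] at hq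
        obtain ⟨β', γ', hsum', hx', hy'⟩ := hq
        have hβ' : β' ≤ β := by
          by_contra hc
          have : x' ∈ U ∩ cbIter (univ : Set X) (Order.succ β) :=
            ⟨hx'U, cbIter_anti _ β' (Order.succ_le_of_lt (not_le.1 hc)) hx'⟩
          rw [hUdisj] at this
          exact this
        have hγ' : γ' ≤ γ := by
          by_contra hc
          have : y' ∈ V ∩ cbIter (univ : Set Y) (Order.succ γ) :=
            ⟨hy'V, cbIter_anti _ γ' (Order.succ_le_of_lt (not_le.1 hc)) hy'⟩
          rw [hVdisj] at this
          exact this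
        have hββ : β' = β := by
          by_contra hc
          have : β' ♯ γ' < β ♯ γ :=
            Ordinal.nadd_lt_nadd_of_lt_of_le (lt_of_le_of_ne hβ' hc) hγ'
          rw [hsum', hsum] at this
          exact lt_irrefl _ this
        have hγγ : γ' = γ := by
          by_contra hc
          have : β' ♯ γ' < β ♯ γ :=
            Ordinal.nadd_lt_nadd_of_le_of_lt hβ' (lt_of_le_of_ne hγ' hc)
          rw [hsum', hsum] at this
          exact lt_irrefl _ this
        exact ⟨⟨hx'U, hββ ▸ hx'⟩, ⟨hy'V, hγγ ▸ hy'⟩⟩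
      exact hinf hfin
    · rintro ⟨x, y⟩ hp
      simp only [mem_iUnion, mem_prod] at hp
      obtain ⟨β, γ, hsum, hx, hy⟩ := hp
      have hlt : α < β ♯ γ := hsum ▸ Order.lt_succ α
      rcases Ordinal.lt_nadd_iff.1 hlt with ⟨b', hb', hle⟩ | ⟨c', hc', hle⟩
      · have heq : b' ♯ γ = α :=
          le_antisymm (Order.lt_succ_iff.1 (hsum ▸ Ordinal.nadd_lt_nadd_right hb' γ)) hle
        have hx' : x ∈ sderiv (cbIter (univ : Set X) b') := by
          rw [← cbIter_succ]
          exact cbIter_anti _ β (Order.succ_le_of_lt hb') hx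
        refine ⟨?_, ?_⟩
        · rw [ih]
          simp only [mem_iUnion, mem_prod]
          exact ⟨b', γ, heq, hx'.1, hy⟩
        · intro W hW hpW
          obtain ⟨U, V, hU, hV, hxU, hyV, hUV⟩ := isOpen_prod_iff.1 hW x y hpW
          have hinf := hx'.2 U hU hxU
          refine ((hinf.image (fun a b _ _ h => congrArg Prod.fst h :
              Set.InjOn (fun x' => ((x', y) : X × Y)) _)).mono ?_)
          rintro q ⟨x', hx'', rfl⟩
          refine ⟨hUV ⟨hx''.1, hyV⟩, ?_⟩
          rw [ih]
          simp only [mem_iUnion, mem_prod]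
          exact ⟨b', γ, heq, hx''.2, hy⟩
      · have heq : β ♯ c' = α :=
          le_antisymm (Order.lt_succ_iff.1 (hsum ▸ Ordinal.nadd_lt_nadd_left hc' β)) hle
        have hy' : y ∈ sderiv (cbIter (univ : Set Y) c') := by
          rw [← cbIter_succ]
          exact cbIter_anti _ γ (Order.succ_le_of_lt hc') hy
        refine ⟨?_, ?_⟩
        · rw [ih]
          simp only [mem_iUnion, mem_prod]
          exact ⟨β, c', heq, hx, hy'.1⟩
        · intro W hW hpW
          obtain ⟨U, V, hU, hV, hxU, hyV, hUV⟩ := isOpen_prod_iff.1 hW x y hpW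
          have hinf := hy'.2 V hV hyV
          refine ((hinf.image (fun a b _ _ h => congrArg Prod.snd h :
              Set.InjOn (fun y' => ((x, y') : X × Y)) _)).mono ?_)
          rintro q ⟨y', hy'', rfl⟩
          refine ⟨hUV ⟨hxU, hy''.1⟩, ?_⟩
          rw [ih]
          simp only [mem_iUnion, mem_prod]
          exact ⟨β, c', heq, hx, hy''.2⟩
  | limit α hα ih =>
    rw [cbIter_limit _ hα]
    apply Set.eq_of_subset_of_subset
    · rintro ⟨x, y⟩ hp
      by_cases hfx : ∀ δ, x ∈ cbIter (univ : Set X) δ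
      · refine mem_iUnion.2 ⟨α, mem_iUnion.2 ⟨0, mem_iUnion.2 ⟨Ordinal.nadd_zero α,
          hfx α, ?_⟩⟩⟩
        rw [cbIter_zero]; trivial
      by_cases hfy : ∀ δ, y ∈ cbIter (univ : Set Y) δ
      · refine mem_iUnion.2 ⟨0, mem_iUnion.2 ⟨α, mem_iUnion.2 ⟨Ordinal.zero_nadd α,
          ?_, hfy α⟩⟩⟩
        rw [cbIter_zero]; trivial
      obtain ⟨r, hr, hr1⟩ := cbIter_rank (univ : Set X) (mem_univ x) hfx
      obtain ⟨s, hs, hs1⟩ := cbIter_rank (univ : Set Y) (mem_univ y) hfy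
      have hbound : ∀ δ < α, δ ≤ r ♯ s := by
        intro δ hδ
        have hpδ := mem_iInter₂.1 hp δ hδ
        rw [ih δ hδ] at hpδ
        simp only [mem_iUnion, mem_prod] at hpδ
        obtain ⟨β, γ, hsum, hx, hy⟩ := hpδ
        have hβ : β ≤ r := by
          by_contra hc
          exact hr1 (cbIter_anti _ β (Order.succ_le_of_lt (not_le.1 hc)) hx)
        have hγ : γ ≤ s := by
          by_contra hc
          exact hs1 (cbIter_anti _ γ (Order.succ_le_of_lt (not_le.1 hc)) hy)
        rw [← hsum]
        exact Ordinal.nadd_le_nadd hβ hγ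
      have hle : α ≤ r ♯ s := by
        by_contra hc
        have h1 : Order.succ (r ♯ s) < α := hα.succ_lt (not_le.1 hc)
        exact (Order.lt_succ (r ♯ s)).not_ge (hbound _ h1)
      obtain ⟨β, γ, hβ, hγ, hsum⟩ := nadd_split (r ♯ s) r s rfl α hle
      exact mem_iUnion.2 ⟨β, mem_iUnion.2 ⟨γ, mem_iUnion.2 ⟨hsum,
        cbIter_anti _ r hβ hr, cbIter_anti _ s hγ hs⟩⟩⟩
    · rintro ⟨x, y⟩ hp
      simp only [mem_iUnion, mem_prod] at hp
      obtain ⟨β, γ, hsum, hx, hy⟩ := hp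
      refine mem_iInter₂.2 fun δ hδ => ?_
      obtain ⟨β', γ', hβ', hγ', heq⟩ := nadd_split α β γ hsum δ hδ.le
      rw [ih δ hδ]
      simp only [mem_iUnion, mem_prod]
      exact ⟨β', γ', heq, cbIter_anti _ β hβ' hx, cbIter_anti _ γ hγ' hy⟩
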